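/- The set S = [0,1]^{2N} is forward invariant for the network actSIS dynamics: if the initial condition (p(0), p_s(0)) lies in S, then the solution (p(t), p_s(t)) remains in S for all t ≥ 0. -/

import Mathlib

open Set


lemma hasDerivAt_maxsq (x : ℝ) :
    HasDerivAt (fun y : ℝ => max y 0 ^ 2) (2 * max x 0) x := by
  rcases lt_trichotomy x 0 with hx | rfl | hx
  · have h : (fun y : ℝ => max y 0 ^ 2) =ᶠ[nhds x] fun _ => (0:ℝ) := by
      filter_upwards [eventually_lt_nhds hx] with y hy
      simp [max_eq_right hy.le]
    rw [max_eq_right hx.le]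
    simpa using (hasDerivAt_const x (0:ℝ)).congr_of_eventuallyEq h
  · rw [hasDerivAt_iff_isLittleO]
    simp only [max_self, ne_eq, OfNat.ofNat_ne_zero, not_false_eq_true, zero_pow, mul_zero,
      zero_mul, sub_zero, smul_eq_mul]
    rw [Asymptotics.isLittleO_iff]
    intro c hc
    filter_upwards [Metric.ball_mem_nhds 0 hc] with y hy
    have h1 : |y| < c := by simpa [Real.dist_eq] using hy
    have hmn : (0:ℝ) ≤ max y 0 := le_max_right _ _
    have h2 : (max y 0) ^ 2 ≤ |y| * |y| := by
      rcases le_total y 0 with h | h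
      · rw [max_eq_right h]; nlinarith [abs_nonneg y]
      · rw [max_eq_left h, abs_of_nonneg h]; nlinarith
    have h3 : ‖max y 0 ^ 2‖ ≤ c * ‖y‖ := by
      rw [Real.norm_eq_abs, Real.norm_eq_abs, abs_of_nonneg (by positivity : (0:ℝ) ≤ max y 0 ^ 2)]
      nlinarith [abs_nonneg y]
    simpa using h3
  · have h : (fun y : ℝ => max y 0 ^ 2) =ᶠ[nhds x] fun y => y ^ 2 := by
      filter_upwards [eventually_gt_nhds hx] with y hy
      simp [max_eq_left hy.le]
    rw [max_eq_left hx.le]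
    have h2 : HasDerivAt (fun y : ℝ => y ^ 2) (2 * x) x := by
      simpa using (hasDerivAt_pow 2 x)
    exact h2.congr_of_eventuallyEq h

lemma hasDerivAt_maxsq_comp {f : ℝ → ℝ} {f' t : ℝ} (hf : HasDerivAt f f' t) :
    HasDerivAt (fun s => max (f s) 0 ^ 2) (2 * max (f t) 0 * f') t := by
  have := (hasDerivAt_maxsq (f t)).comp t hf
  simpa [Function.comp_def, mul_assoc] using this

lemma neg_max_le (x : ℝ) : -(max (-x) 0) ≤ x := by
  rcases le_total x 0 with h | h
  · rw [max_eq_left (by linarith : (0:ℝ) ≤ -x)]; linarith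
  · rw [max_eq_right (by linarith : -x ≤ (0:ℝ))]; linarith

lemma le_one_add_max (x : ℝ) : x ≤ 1 + max (x - 1) 0 := by
  rcases le_total x 1 with h | h
  · rw [max_eq_right (by linarith : x - 1 ≤ (0:ℝ))]; linarith
  · rw [max_eq_left (by linarith : (0:ℝ) ≤ x - 1)]; linarith

lemma clamp_dist (x : ℝ) : |x - max (min x 1) 0| ≤ max (-x) 0 + max (x - 1) 0 := by
  rcases le_total x 0 with h | h
  · rw [min_eq_left (by linarith : x ≤ (1:ℝ)), max_eq_right h,
      max_eq_left (by linarith : (0:ℝ) ≤ -x), max_eq_right (by linarith : x - 1 ≤ (0:ℝ))]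
    rw [sub_zero, abs_of_nonpos h]; linarith
  · rcases le_total x 1 with h1 | h1
    · rw [min_eq_left h1, max_eq_left h, max_eq_right (by linarith : -x ≤ (0:ℝ)),
        max_eq_right (by linarith : x - 1 ≤ (0:ℝ))]
      simp
    · rw [min_eq_right h1, max_eq_left (by linarith : (0:ℝ) ≤ (1:ℝ)),
        max_eq_right (by linarith : -x ≤ (0:ℝ)), max_eq_left (by linarith : (0:ℝ) ≤ x - 1)]
      rw [abs_of_nonneg (by linarith)]; linarith

lemma inner_combine (n A1 B1 Cs Ds W1 W2 W3 W4 Sac Sad : ℝ) (hn : 0 ≤ n)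
    (f1 : A1^2 ≤ n*W1) (f2 : B1^2 ≤ n*W2) (f3 : Cs^2 ≤ n*W3) (f4 : Ds^2 ≤ n*W4)
    (f5 : Sac ≤ (W1+W3)/2) (f6 : Sad ≤ (W1+W4)/2)
    (hW1 : 0 ≤ W1) (hW2 : 0 ≤ W2) (hW3 : 0 ≤ W3) (hW4 : 0 ≤ W4) :
    A1*A1 + Sac + Sad + W2 + Cs*A1 + Ds*B1 ≤ (2*n+2)*(W1+W2+W3+W4) := by
  nlinarith [sq_nonneg (A1-Cs), sq_nonneg (B1-Ds), mul_nonneg hn hW1, mul_nonneg hn hW2,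
    mul_nonneg hn hW3, mul_nonneg hn hW4]

set_option maxHeartbeats 4000000 in
lemma actSIS_step
    (N : ℕ) (A Ahat : Matrix (Fin N) (Fin N) ℝ)
    (hA : ∀ j k, 0 ≤ A j k) (hAhat : ∀ j k, 0 ≤ Ahat j k)
    (β : ℝ) (hβ : 0 < β)
    (δ : Fin N → ℝ) (hδ : ∀ j, 0 < δ j)
    (τ : ℝ) (hτ : 0 < τ)
    (dhat : Fin N → ℝ) (hdhat : ∀ j, dhat j = ∑ k, Ahat j k)
    (hdhatpos : ∀ j, 0 < dhat j)
    (α : Fin N → ℝ → ℝ)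
    (hαrange : ∀ j, ∀ x ∈ Icc (0:ℝ) 1, α j x ∈ Icc (0:ℝ) 1)
    (Kα : ℝ) (hKα0 : 0 ≤ Kα)
    (hKα : ∀ j, ∀ x ∈ Icc (-1:ℝ) 2, ∀ y ∈ Icc (-1:ℝ) 2, |α j x - α j y| ≤ Kα * |x - y|)
    (p ps : ℝ → Fin N → ℝ)
    (hp : ∀ t, ∀ j, HasDerivAt (fun s => p s j)
      ((1 - p t j) * β * α j (ps t j) * (∑ k, A j k * p t k) - δ j * p t j) t)
    (hps : ∀ t, ∀ j, HasDerivAt (fun s => ps s j)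
      ((-(ps t j) + (∑ k, Ahat j k * p t k) / dhat j) / τ) t)
    (u v : ℝ) (huv : u ≤ v)
    (hu : ∀ j, p u j ∈ Icc (0:ℝ) 1 ∧ ps u j ∈ Icc (0:ℝ) 1)
    (hreg : ∀ t ∈ Icc u v, ∀ j, p t j ∈ Icc (-1:ℝ) 2 ∧ ps t j ∈ Icc (-1:ℝ) 2) :
    ∀ t ∈ Icc u v, ∀ j, p t j ∈ Icc (0:ℝ) 1 ∧ ps t j ∈ Icc (0:ℝ) 1 := by
  -- drift abbreviations
  obtain ⟨Dp, hDpdef⟩ : ∃ x : ℝ → Fin N → ℝ, x = fun t j =>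
    (1 - p t j) * β * α j (ps t j) * (∑ k, A j k * p t k) - δ j * p t j := ⟨_, rfl⟩
  obtain ⟨Dps, hDpsdef⟩ : ∃ x : ℝ → Fin N → ℝ, x = fun t j =>
    (-(ps t j) + (∑ k, Ahat j k * p t k) / dhat j) / τ := ⟨_, rfl⟩
  -- constants
  obtain ⟨MA, hMAdef⟩ : ∃ x : ℝ, x = 1 + ∑ j, ∑ k, A j k := ⟨_, rfl⟩
  have hMA1 : (1:ℝ) ≤ MA := by
    have h0 : (0:ℝ) ≤ ∑ j, ∑ k, A j k :=
      Finset.sum_nonneg fun j _ => Finset.sum_nonneg fun k _ => hA j k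
    rw [hMAdef]; linarith
  have hMA0 : (0:ℝ) ≤ MA := by linarith
  have hMArow : ∀ j, ∑ k, A j k ≤ MA := by
    intro j
    have h1 : ∑ k, A j k ≤ ∑ j, ∑ k, A j k :=
      Finset.single_le_sum (f := fun j => ∑ k, A j k)
        (fun i _ => Finset.sum_nonneg fun k _ => hA i k) (Finset.mem_univ j)
    rw [hMAdef]; linarith
  have hMAentry : ∀ j k, A j k ≤ MA := fun j k =>
    (Finset.single_le_sum (fun i _ => hA j i) (Finset.mem_univ k)).trans (hMArow j)
  obtain ⟨Mα, hMαdef⟩ : ∃ x : ℝ, x = 1 + 2 * Kα := ⟨_, rfl⟩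
  have hMα1 : (1:ℝ) ≤ Mα := by rw [hMαdef]; linarith
  have hMα0 : (0:ℝ) ≤ Mα := by linarith
  have hclamp_mem : ∀ x : ℝ, x ∈ Icc (-1:ℝ) 2 → max (min x 1) 0 ∈ Icc (0:ℝ) 1 := by
    intro x _
    refine ⟨le_max_right _ _, ?_⟩
    rcases le_total x 1 with h | h
    · rcases le_total x 0 with h0 | h0
      · rw [min_eq_left h, max_eq_right h0]; norm_num
      · rw [min_eq_left h, max_eq_left h0]; exact h
    · rw [min_eq_right h]; norm_num
  have hclamp_mem' : ∀ x : ℝ, x ∈ Icc (-1:ℝ) 2 → max (min x 1) 0 ∈ Icc (-1:ℝ) 2 := by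
    intro x hx
    have h := hclamp_mem x hx
    exact ⟨by linarith [h.1], by linarith [h.2]⟩
  have hMα : ∀ j, ∀ x ∈ Icc (-1:ℝ) 2, |α j x| ≤ Mα := by
    intro j x hx
    set y := max (min x 1) 0 with hy
    have hy1 := hclamp_mem x hx
    have h1 : |α j x - α j y| ≤ Kα * |x - y| := hKα j x hx y (hclamp_mem' x hx)
    have h2 : |x - y| ≤ 2 := by
      rw [abs_sub_le_iff]
      exact ⟨by linarith [hy1.1, hx.2], by linarith [hy1.2, hx.1]⟩
    have h3 : |α j y| ≤ 1 := by
      have h4 := hαrange j y hy1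
      rw [abs_of_nonneg h4.1]; exact h4.2
    have h5 : Kα * |x - y| ≤ Kα * 2 := mul_le_mul_of_nonneg_left h2 hKα0
    have h6 : |α j x| ≤ |α j x - α j y| + |α j y| := by
      have := abs_sub_abs_le_abs_sub (α j x) (α j y)
      have := abs_nonneg (α j x - α j y)
      linarith
    rw [hMαdef]; linarith
  have hαneg : ∀ j, ∀ x ∈ Icc (-1:ℝ) 2,
      -(α j x) ≤ Kα * (max (-x) 0 + max (x - 1) 0) := by
    intro j x hx
    set y := max (min x 1) 0 with hy
    have hy1 := hclamp_mem x hx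
    have h1 : |α j x - α j y| ≤ Kα * |x - y| := hKα j x hx y (hclamp_mem' x hx)
    have h2 : |x - y| ≤ max (-x) 0 + max (x - 1) 0 := clamp_dist x
    have h3 : 0 ≤ α j y := (hαrange j y hy1).1
    have h4 : Kα * |x - y| ≤ Kα * (max (-x) 0 + max (x - 1) 0) :=
      mul_le_mul_of_nonneg_left h2 hKα0
    have h5 := (abs_le.1 h1).1
    linarith
  obtain ⟨C, hCdef⟩ : ∃ x : ℝ, x = 2*β*Mα*MA + 4*β*Kα*MA + 1/τ + 1 := ⟨_, rfl⟩
  have hτ' : 0 < 1/τ := by positivity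
  have hq1 : 0 ≤ 2*β*Mα*MA := by positivity
  have hq2 : 0 ≤ 4*β*Kα*MA := by positivity
  have hC1 : 2*β*Mα*MA ≤ C := by rw [hCdef]; linarith
  have hC2 : 4*β*Kα*MA ≤ C := by rw [hCdef]; linarith
  have hC3 : 1/τ ≤ C := by rw [hCdef]; linarith
  have hC0 : 0 < C := lt_of_lt_of_le hτ' hC3
  obtain ⟨L, hLdef⟩ : ∃ x : ℝ, x = 2*C*(2*(N:ℝ)+2) := ⟨_, rfl⟩
  -- the Lyapunov-type function
  obtain ⟨V, hVdef⟩ : ∃ x : ℝ → ℝ, x = fun t => ∑ j, (max (-(p t j)) 0 ^ 2 + max (p t j - 1) 0 ^ 2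
      + max (-(ps t j)) 0 ^ 2 + max (ps t j - 1) 0 ^ 2) := ⟨_, rfl⟩
  obtain ⟨V', hV'def⟩ : ∃ x : ℝ → ℝ, x = fun t => ∑ j, (2 * max (-(p t j)) 0 * (-(Dp t j))
      + 2 * max (p t j - 1) 0 * (Dp t j)
      + 2 * max (-(ps t j)) 0 * (-(Dps t j))
      + 2 * max (ps t j - 1) 0 * (Dps t j)) := ⟨_, rfl⟩
  have hVd : ∀ t, HasDerivAt V (V' t) t := by
    intro t
    simp only [hVdef, hV'def, hDpdef, hDpsdef]
    apply HasDerivAt.fun_sum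
    intro j _
    have d1 : HasDerivAt (fun s => max (-(p s j)) 0 ^ 2)
        (2 * max (-(p t j)) 0 *
          (-((1 - p t j) * β * α j (ps t j) * (∑ k, A j k * p t k) - δ j * p t j))) t :=
      hasDerivAt_maxsq_comp (hp t j).neg
    have d2 : HasDerivAt (fun s => max (p s j - 1) 0 ^ 2)
        (2 * max (p t j - 1) 0 *
          ((1 - p t j) * β * α j (ps t j) * (∑ k, A j k * p t k) - δ j * p t j)) t := by
      have := hasDerivAt_maxsq_comp ((hp t j).sub_const 1)
      simpa using this
    have d3 : HasDerivAt (fun s => max (-(ps s j)) 0 ^ 2)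
        (2 * max (-(ps t j)) 0 *
          (-((-(ps t j) + (∑ k, Ahat j k * p t k) / dhat j) / τ))) t :=
      hasDerivAt_maxsq_comp (hps t j).neg
    have d4 : HasDerivAt (fun s => max (ps s j - 1) 0 ^ 2)
        (2 * max (ps t j - 1) 0 *
          ((-(ps t j) + (∑ k, Ahat j k * p t k) / dhat j) / τ)) t := by
      have := hasDerivAt_maxsq_comp ((hps t j).sub_const 1)
      simpa using this
    exact ((d1.add d2).add d3).add d4
  have hVnonneg : ∀ s, 0 ≤ V s := by
    intro s; simp only [hVdef]
    exact Finset.sum_nonneg fun j _ => by positivity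
  have hV0 : V u = 0 := by
    simp only [hVdef]
    apply Finset.sum_eq_zero
    intro j _
    obtain ⟨⟨h1, h2⟩, h3, h4⟩ := hu j
    rw [max_eq_right (by linarith : -(p u j) ≤ 0), max_eq_right (by linarith : p u j - 1 ≤ 0),
      max_eq_right (by linarith : -(ps u j) ≤ 0), max_eq_right (by linarith : ps u j - 1 ≤ 0)]
    norm_num
  -- the key differential inequality
  have hkey : ∀ t ∈ Icc u v, V' t ≤ L * V t := by
    intro t ht
    have hPm : ∀ k, p t k ∈ Icc (-1:ℝ) 2 := fun k => (hreg t ht k).1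
    have hQm : ∀ k, ps t k ∈ Icc (-1:ℝ) 2 := fun k => (hreg t ht k).2
    obtain ⟨a, hadef⟩ : ∃ x : Fin N → ℝ, x = fun k => max (-(p t k)) 0 := ⟨_, rfl⟩
    obtain ⟨b, hbdef⟩ : ∃ x : Fin N → ℝ, x = fun k => max (p t k - 1) 0 := ⟨_, rfl⟩
    obtain ⟨c, hcdef⟩ : ∃ x : Fin N → ℝ, x = fun k => max (-(ps t k)) 0 := ⟨_, rfl⟩
    obtain ⟨d, hddef⟩ : ∃ x : Fin N → ℝ, x = fun k => max (ps t k - 1) 0 := ⟨_, rfl⟩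
    have ha : ∀ k, a k = max (-(p t k)) 0 := fun k => by rw [hadef]
    have hb : ∀ k, b k = max (p t k - 1) 0 := fun k => by rw [hbdef]
    have hc : ∀ k, c k = max (-(ps t k)) 0 := fun k => by rw [hcdef]
    have hd : ∀ k, d k = max (ps t k - 1) 0 := fun k => by rw [hddef]
    have ha0 : ∀ k, 0 ≤ a k := fun k => by rw [ha k]; exact le_max_right _ _
    have hb0 : ∀ k, 0 ≤ b k := fun k => by rw [hb k]; exact le_max_right _ _
    have hc0 : ∀ k, 0 ≤ c k := fun k => by rw [hc k]; exact le_max_right _ _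
    have hd0 : ∀ k, 0 ≤ d k := fun k => by rw [hd k]; exact le_max_right _ _
    obtain ⟨A1, hA1def⟩ : ∃ x : ℝ, x = ∑ k, a k := ⟨_, rfl⟩
    obtain ⟨B1, hB1def⟩ : ∃ x : ℝ, x = ∑ k, b k := ⟨_, rfl⟩
    have hA10 : 0 ≤ A1 := by rw [hA1def]; exact Finset.sum_nonneg fun k _ => ha0 k
    have hB10 : 0 ≤ B1 := by rw [hB1def]; exact Finset.sum_nonneg fun k _ => hb0 k
    -- claim 1
    have h1 : ∀ j, a j * (-(Dp t j)) ≤ C * (a j * A1 + a j * c j + a j * d j) := by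
      intro j
      rcases le_or_gt 0 (p t j) with h | h
      · have haj : a j = 0 := by rw [ha j]; exact max_eq_right (by linarith)
        rw [haj]; simp
      · have hcd0 : 0 ≤ c j + d j := by linarith [hc0 j, hd0 j]
        obtain ⟨S, hSdef⟩ : ∃ x : ℝ, x = ∑ k, A j k * p t k := ⟨_, rfl⟩
        obtain ⟨αv, hαvdef⟩ : ∃ x : ℝ, x = α j (ps t j) := ⟨_, rfl⟩
        have hSlow : -S ≤ MA * A1 := by
          have e0 : -S = ∑ k, -(A j k * p t k) := by
            rw [hSdef, ← Finset.sum_neg_distrib]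
          rw [e0]
          calc ∑ k, -(A j k * p t k) ≤ ∑ k, MA * a k := by
                apply Finset.sum_le_sum
                intro k _
                have hk1 : -(p t k) ≤ a k := by rw [ha k]; exact le_max_left _ _
                have hk2 : A j k * (-(p t k)) ≤ A j k * a k :=
                  mul_le_mul_of_nonneg_left hk1 (hA j k)
                have hk3 : A j k * a k ≤ MA * a k :=
                  mul_le_mul_of_nonneg_right (hMAentry j k) (ha0 k)
                nlinarith [hk2, hk3]
            _ = MA * A1 := by rw [hA1def, Finset.mul_sum]
        have hSabs : |S| ≤ 2 * MA := by
          rw [hSdef]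
          calc |∑ k, A j k * p t k| ≤ ∑ k, |A j k * p t k| := Finset.abs_sum_le_sum_abs _ _
            _ ≤ ∑ k, A j k * 2 := by
                apply Finset.sum_le_sum
                intro k _
                rw [abs_mul, abs_of_nonneg (hA j k)]
                have hk : |p t k| ≤ 2 := abs_le.2 ⟨by linarith [(hPm k).1], (hPm k).2⟩
                exact mul_le_mul_of_nonneg_left hk (hA j k)
            _ = 2 * ∑ k, A j k := by rw [← Finset.sum_mul]; ring
            _ ≤ 2 * MA := by linarith [hMArow j]
        have hav1 : αv ≤ Mα := by rw [hαvdef]; exact le_of_abs_le (hMα j _ (hQm j))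
        have hav2 : -αv ≤ Kα * (c j + d j) := by
          rw [hαvdef, hc j, hd j]; exact hαneg j _ (hQm j)
        have hT : -(αv * S) ≤ Mα * (MA * A1) + (Kα * (c j + d j)) * (2 * MA) := by
          have hMA1nn : 0 ≤ MA * A1 := mul_nonneg hMA0 hA10
          have hKcd : 0 ≤ Kα * (c j + d j) := mul_nonneg hKα0 hcd0
          rcases le_or_gt 0 αv with hα | hα
          · have e1 : αv * (-S) ≤ αv * (MA * A1) := mul_le_mul_of_nonneg_left hSlow hα
            have e2 : αv * (MA * A1) ≤ Mα * (MA * A1) :=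
              mul_le_mul_of_nonneg_right hav1 hMA1nn
            nlinarith [mul_nonneg hKcd (by linarith : (0:ℝ) ≤ 2 * MA)]
          · have e1 : (-αv) * S ≤ (-αv) * |S| :=
              mul_le_mul_of_nonneg_left (le_abs_self S) (by linarith)
            have e2 : (-αv) * |S| ≤ (Kα * (c j + d j)) * |S| :=
              mul_le_mul_of_nonneg_right hav2 (abs_nonneg S)
            have e3 : (Kα * (c j + d j)) * |S| ≤ (Kα * (c j + d j)) * (2 * MA) :=
              mul_le_mul_of_nonneg_left hSabs hKcd
            nlinarith [mul_nonneg hMα0 hMA1nn]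
        have hBnd : 0 ≤ Mα * (MA * A1) + (Kα * (c j + d j)) * (2 * MA) := by
          have := mul_nonneg hMα0 (mul_nonneg hMA0 hA10)
          have := mul_nonneg (mul_nonneg hKα0 hcd0) (by linarith : (0:ℝ) ≤ 2 * MA)
          linarith
        have h1P : (1:ℝ) ≤ 1 - p t j := by linarith
        have h2P : 1 - p t j ≤ 2 := by linarith [(hPm j).1]
        have hδP : δ j * p t j ≤ 0 :=
          mul_nonpos_of_nonneg_of_nonpos (hδ j).le h.le
        have hstep : (1 - p t j) * β * (-(αv * S))
            ≤ 2 * β * (Mα * (MA * A1) + (Kα * (c j + d j)) * (2 * MA)) := by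
          rcases le_or_gt 0 (-(αv * S)) with hT0 | hT0
          · nlinarith [mul_le_mul_of_nonneg_right h2P hT0,
              mul_le_mul_of_nonneg_left hT (by positivity : (0:ℝ) ≤ 2 * β)]
          · nlinarith [mul_nonneg (by positivity : (0:ℝ) ≤ 2 * β) hBnd,
              mul_pos hβ (neg_pos.2 hT0)]
        have hDpbound : -(Dp t j) ≤ C * (A1 + c j + d j) := by
          have e1 : -(Dp t j) = (1 - p t j) * β * (-(αv * S)) + δ j * p t j := by
            simp only [hDpdef, hαvdef, hSdef]; ring
          have e3 : (2*β*Mα*MA) * A1 ≤ C * A1 :=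
            mul_le_mul_of_nonneg_right hC1 hA10
          have e4 : (4*β*Kα*MA) * (c j + d j) ≤ C * (c j + d j) :=
            mul_le_mul_of_nonneg_right hC2 hcd0
          nlinarith [hstep, hδP]
        calc a j * (-(Dp t j)) ≤ a j * (C * (A1 + c j + d j)) :=
              mul_le_mul_of_nonneg_left hDpbound (ha0 j)
          _ = C * (a j * A1 + a j * c j + a j * d j) := by ring
    -- claim 2
    have h2 : ∀ j, b j * Dp t j ≤ C * (b j * b j) := by
      intro j
      rcases le_or_gt (p t j) 1 with h | h
      · have hbj : b j = 0 := by rw [hb j]; exact max_eq_right (by linarith)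
        rw [hbj]; simp
      · have hbj : b j = p t j - 1 := by rw [hb j]; exact max_eq_left (by linarith)
        obtain ⟨S, hSdef⟩ : ∃ x : ℝ, x = ∑ k, A j k * p t k := ⟨_, rfl⟩
        obtain ⟨αv, hαvdef⟩ : ∃ x : ℝ, x = α j (ps t j) := ⟨_, rfl⟩
        have hSabs : |S| ≤ 2 * MA := by
          rw [hSdef]
          calc |∑ k, A j k * p t k| ≤ ∑ k, |A j k * p t k| := Finset.abs_sum_le_sum_abs _ _
            _ ≤ ∑ k, A j k * 2 := by
                apply Finset.sum_le_sum
                intro k _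
                rw [abs_mul, abs_of_nonneg (hA j k)]
                have hk : |p t k| ≤ 2 := abs_le.2 ⟨by linarith [(hPm k).1], (hPm k).2⟩
                exact mul_le_mul_of_nonneg_left hk (hA j k)
            _ = 2 * ∑ k, A j k := by rw [← Finset.sum_mul]; ring
            _ ≤ 2 * MA := by linarith [hMArow j]
        have hαabs : |αv| ≤ Mα := by rw [hαvdef]; exact hMα j _ (hQm j)
        have habs : -(αv * S) ≤ Mα * (2 * MA) := by
          calc -(αv * S) ≤ |αv * S| := neg_le_abs _
            _ = |αv| * |S| := abs_mul _ _
            _ ≤ Mα * (2 * MA) :=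
              mul_le_mul hαabs hSabs (abs_nonneg S) hMα0
        have hδP : 0 ≤ δ j * p t j := mul_nonneg (hδ j).le (by linarith)
        have e1 : Dp t j = (p t j - 1) * β * (-(αv * S)) - δ j * p t j := by
          simp only [hDpdef, hαvdef, hSdef]; ring
        have e2 : (p t j - 1) * β * (-(αv * S)) ≤ (p t j - 1) * β * (Mα * (2 * MA)) :=
          mul_le_mul_of_nonneg_left habs (mul_nonneg (by linarith) hβ.le)
        have e3 : (p t j - 1) * β * (Mα * (2 * MA)) ≤ C * (p t j - 1) := by
          nlinarith [hC1, h, mul_nonneg hβ.le (mul_nonneg hMα0 hMA0)]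
        calc b j * Dp t j ≤ b j * (C * (p t j - 1)) := by
              apply mul_le_mul_of_nonneg_left _ (hb0 j)
              rw [e1]; linarith
          _ = C * (b j * b j) := by rw [hbj]; ring
    -- claim 3
    have h3 : ∀ j, c j * (-(Dps t j)) ≤ C * (c j * A1) := by
      intro j
      rcases le_or_gt 0 (ps t j) with h | h
      · have hcj : c j = 0 := by rw [hc j]; exact max_eq_right (by linarith)
        rw [hcj]; simp
      · have hWlow : -((∑ k, Ahat j k * p t k) / dhat j) ≤ A1 := by
          have e1 : -(∑ k, Ahat j k * p t k) ≤ dhat j * A1 := by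
            rw [← Finset.sum_neg_distrib]
            calc ∑ k, -(Ahat j k * p t k) ≤ ∑ k, dhat j * a k := by
                  apply Finset.sum_le_sum
                  intro k _
                  have hk1 : -(p t k) ≤ a k := by rw [ha k]; exact le_max_left _ _
                  have hk2 : Ahat j k * (-(p t k)) ≤ Ahat j k * a k :=
                    mul_le_mul_of_nonneg_left hk1 (hAhat j k)
                  have hentry : Ahat j k ≤ dhat j := by
                    rw [hdhat j]
                    exact Finset.single_le_sum (fun i _ => hAhat j i) (Finset.mem_univ k)
                  have hk3 : Ahat j k * a k ≤ dhat j * a k :=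
                    mul_le_mul_of_nonneg_right hentry (ha0 k)
                  nlinarith [hk2, hk3]
              _ = dhat j * A1 := by rw [hA1def, Finset.mul_sum]
          have e2 : -((∑ k, Ahat j k * p t k) / dhat j)
              = (-(∑ k, Ahat j k * p t k)) / dhat j := by ring
          rw [e2]
          calc (-(∑ k, Ahat j k * p t k)) / dhat j ≤ (dhat j * A1) / dhat j :=
                (div_le_div_iff_of_pos_right (hdhatpos j)).2 e1
            _ = A1 := mul_div_cancel_left₀ _ (ne_of_gt (hdhatpos j))
        have hDpsb : -(Dps t j) ≤ C * A1 := by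
          have e1 : -(Dps t j) = (ps t j - (∑ k, Ahat j k * p t k) / dhat j) / τ := by
            simp only [hDpsdef]; ring
          rw [e1]
          calc (ps t j - (∑ k, Ahat j k * p t k) / dhat j) / τ ≤ A1 / τ := by
                apply (div_le_div_iff_of_pos_right hτ).2
                linarith
            _ = (1/τ) * A1 := by ring
            _ ≤ C * A1 := mul_le_mul_of_nonneg_right hC3 hA10
        calc c j * (-(Dps t j)) ≤ c j * (C * A1) :=
              mul_le_mul_of_nonneg_left hDpsb (hc0 j)
          _ = C * (c j * A1) := by ring
    -- claim 4
    have h4 : ∀ j, d j * Dps t j ≤ C * (d j * B1) := by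
      intro j
      rcases le_or_gt (ps t j) 1 with h | h
      · have hdj : d j = 0 := by rw [hd j]; exact max_eq_right (by linarith)
        rw [hdj]; simp
      · have hWhigh : (∑ k, Ahat j k * p t k) / dhat j ≤ 1 + B1 := by
          have e1 : ∑ k, Ahat j k * p t k ≤ dhat j * (1 + B1) := by
            calc ∑ k, Ahat j k * p t k ≤ ∑ k, (Ahat j k + dhat j * b k) := by
                  apply Finset.sum_le_sum
                  intro k _
                  have hk1 : p t k ≤ 1 + b k := by rw [hb k]; exact le_one_add_max _
                  have hk2 : Ahat j k * p t k ≤ Ahat j k * (1 + b k) :=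
                    mul_le_mul_of_nonneg_left hk1 (hAhat j k)
                  have hentry : Ahat j k ≤ dhat j := by
                    rw [hdhat j]
                    exact Finset.single_le_sum (fun i _ => hAhat j i) (Finset.mem_univ k)
                  have hk3 : Ahat j k * b k ≤ dhat j * b k :=
                    mul_le_mul_of_nonneg_right hentry (hb0 k)
                  nlinarith [hk2, hk3]
              _ = dhat j * (1 + B1) := by
                  rw [Finset.sum_add_distrib, ← Finset.mul_sum, ← hdhat j, ← hB1def]; ring
          calc (∑ k, Ahat j k * p t k) / dhat j ≤ (dhat j * (1 + B1)) / dhat j :=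
                (div_le_div_iff_of_pos_right (hdhatpos j)).2 e1
            _ = 1 + B1 := mul_div_cancel_left₀ _ (ne_of_gt (hdhatpos j))
        have hDpsb : Dps t j ≤ C * B1 := by
          have e1 : Dps t j = (-(ps t j) + (∑ k, Ahat j k * p t k) / dhat j) / τ := by
            simp only [hDpsdef]
          rw [e1]
          calc (-(ps t j) + (∑ k, Ahat j k * p t k) / dhat j) / τ ≤ B1 / τ := by
                apply (div_le_div_iff_of_pos_right hτ).2
                linarith
            _ = (1/τ) * B1 := by ring
            _ ≤ C * B1 := mul_le_mul_of_nonneg_right hC3 hB10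
        calc d j * Dps t j ≤ d j * (C * B1) :=
              mul_le_mul_of_nonneg_left hDpsb (hd0 j)
          _ = C * (d j * B1) := by ring
    -- combine
    have hterm : ∀ j, 2 * a j * (-(Dp t j)) + 2 * b j * (Dp t j)
        + 2 * c j * (-(Dps t j)) + 2 * d j * (Dps t j)
        ≤ 2 * C * (a j * A1 + a j * c j + a j * d j + b j * b j + c j * A1 + d j * B1) := by
      intro j
      linarith [h1 j, h2 j, h3 j, h4 j]
    have hsum1 : V' t ≤ ∑ j, 2 * C * (a j * A1 + a j * c j + a j * d j
        + b j * b j + c j * A1 + d j * B1) := by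
      simp only [hV'def, ← ha, ← hb, ← hc, ← hd]
      exact Finset.sum_le_sum fun j _ => hterm j
    obtain ⟨W1, hW1def⟩ : ∃ x : ℝ, x = ∑ k, a k ^ 2 := ⟨_, rfl⟩
    obtain ⟨W2, hW2def⟩ : ∃ x : ℝ, x = ∑ k, b k ^ 2 := ⟨_, rfl⟩
    obtain ⟨W3, hW3def⟩ : ∃ x : ℝ, x = ∑ k, c k ^ 2 := ⟨_, rfl⟩
    obtain ⟨W4, hW4def⟩ : ∃ x : ℝ, x = ∑ k, d k ^ 2 := ⟨_, rfl⟩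
    obtain ⟨Cs, hCsdef⟩ : ∃ x : ℝ, x = ∑ k, c k := ⟨_, rfl⟩
    obtain ⟨Ds, hDsdef⟩ : ∃ x : ℝ, x = ∑ k, d k := ⟨_, rfl⟩
    have hW10 : 0 ≤ W1 := by rw [hW1def]; exact Finset.sum_nonneg fun k _ => sq_nonneg _
    have hW20 : 0 ≤ W2 := by rw [hW2def]; exact Finset.sum_nonneg fun k _ => sq_nonneg _
    have hW30 : 0 ≤ W3 := by rw [hW3def]; exact Finset.sum_nonneg fun k _ => sq_nonneg _
    have hW40 : 0 ≤ W4 := by rw [hW4def]; exact Finset.sum_nonneg fun k _ => sq_nonneg _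
    have hCs0 : 0 ≤ Cs := by rw [hCsdef]; exact Finset.sum_nonneg fun k _ => hc0 k
    have hDs0 : 0 ≤ Ds := by rw [hDsdef]; exact Finset.sum_nonneg fun k _ => hd0 k
    have hcard : ((Finset.univ : Finset (Fin N)).card : ℝ) = (N:ℝ) := by
      simp
    have f1 : A1 ^ 2 ≤ (N:ℝ) * W1 := by
      have := sq_sum_le_card_mul_sum_sq (s := (Finset.univ : Finset (Fin N))) (f := a)
      rw [hA1def, hW1def]
      calc (∑ k, a k) ^ 2 ≤ ((Finset.univ : Finset (Fin N)).card : ℝ) * ∑ k, a k ^ 2 := this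
        _ = (N:ℝ) * ∑ k, a k ^ 2 := by rw [hcard]
    have f2 : B1 ^ 2 ≤ (N:ℝ) * W2 := by
      have := sq_sum_le_card_mul_sum_sq (s := (Finset.univ : Finset (Fin N))) (f := b)
      rw [hB1def, hW2def]
      calc (∑ k, b k) ^ 2 ≤ ((Finset.univ : Finset (Fin N)).card : ℝ) * ∑ k, b k ^ 2 := this
        _ = (N:ℝ) * ∑ k, b k ^ 2 := by rw [hcard]
    have f3 : Cs ^ 2 ≤ (N:ℝ) * W3 := by
      have := sq_sum_le_card_mul_sum_sq (s := (Finset.univ : Finset (Fin N))) (f := c)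
      rw [hCsdef, hW3def]
      calc (∑ k, c k) ^ 2 ≤ ((Finset.univ : Finset (Fin N)).card : ℝ) * ∑ k, c k ^ 2 := this
        _ = (N:ℝ) * ∑ k, c k ^ 2 := by rw [hcard]
    have f4 : Ds ^ 2 ≤ (N:ℝ) * W4 := by
      have := sq_sum_le_card_mul_sum_sq (s := (Finset.univ : Finset (Fin N))) (f := d)
      rw [hDsdef, hW4def]
      calc (∑ k, d k) ^ 2 ≤ ((Finset.univ : Finset (Fin N)).card : ℝ) * ∑ k, d k ^ 2 := this
        _ = (N:ℝ) * ∑ k, d k ^ 2 := by rw [hcard]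
    have f5 : ∑ k, a k * c k ≤ (W1 + W3)/2 := by
      rw [hW1def, hW3def, ← Finset.sum_add_distrib, Finset.sum_div]
      apply Finset.sum_le_sum
      intro k _
      linarith [two_mul_le_add_sq (a k) (c k)]
    have f6 : ∑ k, a k * d k ≤ (W1 + W4)/2 := by
      rw [hW1def, hW4def, ← Finset.sum_add_distrib, Finset.sum_div]
      apply Finset.sum_le_sum
      intro k _
      linarith [two_mul_le_add_sq (a k) (d k)]
    have hW2' : (∑ k, b k * b k) = W2 := by
      rw [hW2def]; exact Finset.sum_congr rfl fun k _ => by ring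
    have hsum2 : ∑ j, 2 * C * (a j * A1 + a j * c j + a j * d j + b j * b j + c j * A1 + d j * B1)
        = 2 * C * (A1 * A1 + (∑ k, a k * c k) + (∑ k, a k * d k) + (∑ k, b k * b k)
          + Cs * A1 + Ds * B1) := by
      rw [← Finset.mul_sum]
      congr 1
      rw [Finset.sum_add_distrib, Finset.sum_add_distrib, Finset.sum_add_distrib,
        Finset.sum_add_distrib, Finset.sum_add_distrib, ← Finset.sum_mul, ← Finset.sum_mul,
        ← Finset.sum_mul, ← hA1def, ← hCsdef, ← hDsdef]
    have hVt : V t = W1 + W2 + W3 + W4 := by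
      simp only [hVdef, ← ha, ← hb, ← hc, ← hd, hW1def, hW2def, hW3def, hW4def]
      rw [← Finset.sum_add_distrib, ← Finset.sum_add_distrib, ← Finset.sum_add_distrib]
    have hinner : A1 * A1 + (∑ k, a k * c k) + (∑ k, a k * d k) + W2 + Cs * A1 + Ds * B1
        ≤ (2*(N:ℝ)+2) * (W1 + W2 + W3 + W4) :=
      inner_combine (N:ℝ) A1 B1 Cs Ds W1 W2 W3 W4 _ _ (Nat.cast_nonneg N)
        f1 f2 f3 f4 f5 f6 hW10 hW20 hW30 hW40
    calc V' t ≤ 2 * C * (A1 * A1 + (∑ k, a k * c k) + (∑ k, a k * d k) + (∑ k, b k * b k)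
          + Cs * A1 + Ds * B1) := by
          rw [← hsum2]; exact hsum1
      _ = 2 * C * (A1 * A1 + (∑ k, a k * c k) + (∑ k, a k * d k) + W2 + Cs * A1 + Ds * B1) := by
          rw [hW2']
      _ ≤ 2 * C * ((2*(N:ℝ)+2) * (W1 + W2 + W3 + W4)) :=
          mul_le_mul_of_nonneg_left hinner (by positivity)
      _ = L * V t := by rw [hVt, hLdef]; ring
  -- Gronwall
  obtain ⟨E, hEdef⟩ : ∃ x : ℝ → ℝ, x = fun s => V s * Real.exp (-L * s) := ⟨_, rfl⟩
  have hEd : ∀ s, HasDerivAt E ((V' s - L * V s) * Real.exp (-L * s)) s := by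
    intro s
    have h1 : HasDerivAt (fun x : ℝ => Real.exp (-L * x)) (Real.exp (-L * s) * (-L)) s := by
      have := ((hasDerivAt_id s).const_mul (-L)).exp
      simpa using this
    have h2 := (hVd s).fun_mul h1
    simp only [hEdef]
    exact h2.congr_deriv (by ring)
  have hanti : AntitoneOn E (Icc u v) := by
    apply antitoneOn_of_deriv_nonpos (convex_Icc u v)
    · exact fun s _ => (hEd s).continuousAt.continuousWithinAt
    · exact fun s _ => (hEd s).differentiableAt.differentiableWithinAt
    · intro s hs
      rw [(hEd s).deriv]
      have hsm : s ∈ Icc u v := interior_subset hs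
      have hk := hkey s hsm
      apply mul_nonpos_of_nonpos_of_nonneg
      · linarith
      · exact (Real.exp_pos _).le
  have hzero : ∀ s ∈ Icc u v, V s = 0 := by
    intro s hs
    have h1 : E s ≤ E u := hanti (left_mem_Icc.2 huv) hs hs.1
    have h2 : E u = 0 := by simp only [hEdef]; simp [hV0]
    have h3 : 0 ≤ V s := hVnonneg s
    have h4 : V s * Real.exp (-L * s) ≤ 0 := by
      simp only [hEdef] at h1 h2
      linarith
    nlinarith [Real.exp_pos (-L * s)]
  -- extract coordinatewise bounds
  intro t ht j
  have hVt := hzero t ht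
  simp only [hVdef] at hVt
  have hterm0 : ∀ i ∈ (Finset.univ : Finset (Fin N)),
      (0:ℝ) ≤ max (-(p t i)) 0 ^ 2 + max (p t i - 1) 0 ^ 2
        + max (-(ps t i)) 0 ^ 2 + max (ps t i - 1) 0 ^ 2 := by
    intro i _; positivity
  have hj := (Finset.sum_eq_zero_iff_of_nonneg hterm0).1 hVt j (Finset.mem_univ j)
  have key4 : ∀ x : ℝ, max x 0 ^ 2 = 0 → max x 0 = 0 := by
    intro x hx
    exact pow_eq_zero_iff (n := 2) (by norm_num) |>.1 hx
  have t1 := sq_nonneg (max (-(p t j)) 0)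
  have t2 := sq_nonneg (max (p t j - 1) 0)
  have t3 := sq_nonneg (max (-(ps t j)) 0)
  have t4 := sq_nonneg (max (ps t j - 1) 0)
  have s1 : max (-(p t j)) 0 = 0 := key4 _ (by linarith)
  have s2 : max (p t j - 1) 0 = 0 := key4 _ (by linarith)
  have s3 : max (-(ps t j)) 0 = 0 := key4 _ (by linarith)
  have s4 : max (ps t j - 1) 0 = 0 := key4 _ (by linarith)
  have m1 := le_max_left (-(p t j)) 0
  have m2 := le_max_left (p t j - 1) 0
  have m3 := le_max_left (-(ps t j)) 0
  have m4 := le_max_left (ps t j - 1) 0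
  rw [s1] at m1; rw [s2] at m2; rw [s3] at m3; rw [s4] at m4
  exact ⟨⟨by linarith, by linarith⟩, ⟨by linarith, by linarith⟩⟩

set_option maxHeartbeats 1000000 in
/-- Forward invariance of `[0,1]^{2N}` for the network actSIS dynamics. -/
theorem actSIS_forward_invariance
    (N : ℕ) (A Ahat : Matrix (Fin N) (Fin N) ℝ)
    (hA : ∀ j k, 0 ≤ A j k) (hAhat : ∀ j k, 0 ≤ Ahat j k)
    (β : ℝ) (hβ : 0 < β)
    (δ : Fin N → ℝ) (hδ : ∀ j, 0 < δ j)
    (τ : ℝ) (hτ : 0 < τ)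
    (dhat : Fin N → ℝ) (hdhat : ∀ j, dhat j = ∑ k, Ahat j k)
    (hdhatpos : ∀ j, 0 < dhat j)
    (α : Fin N → ℝ → ℝ)
    (hαrange : ∀ j, ∀ x ∈ Icc (0:ℝ) 1, α j x ∈ Icc (0:ℝ) 1)
    (hαC1 : ∀ j, ContDiff ℝ 1 (α j))
    (hαbdd : ∀ j, ∃ C : ℝ, ∀ x ∈ Icc (0:ℝ) 1, |deriv (α j) x| ≤ C)
    (p ps : ℝ → Fin N → ℝ)
    (hp : ∀ t, ∀ j, HasDerivAt (fun s => p s j)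
      ((1 - p t j) * β * α j (ps t j) * (∑ k, A j k * p t k) - δ j * p t j) t)
    (hps : ∀ t, ∀ j, HasDerivAt (fun s => ps s j)
      ((-(ps t j) + (∑ k, Ahat j k * p t k) / dhat j) / τ) t)
    (hinit : ∀ j, p 0 j ∈ Icc (0:ℝ) 1 ∧ ps 0 j ∈ Icc (0:ℝ) 1) :
    ∀ t ≥ (0:ℝ), ∀ j, p t j ∈ Icc (0:ℝ) 1 ∧ ps t j ∈ Icc (0:ℝ) 1 := by
  have hpc : ∀ j, Continuous (fun t => p t j) := fun j =>
    continuous_iff_continuousAt.2 fun t => (hp t j).continuousAt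
  have hpsc : ∀ j, Continuous (fun t => ps t j) := fun j =>
    continuous_iff_continuousAt.2 fun t => (hps t j).continuousAt
  -- a uniform Lipschitz constant for the α j on [-1,2]
  have hK : ∀ j, ∃ K : ℝ, ∀ x ∈ Icc (-1:ℝ) 2, ‖deriv (α j) x‖ ≤ K := fun j =>
    (isCompact_Icc).exists_bound_of_continuousOn
      (((hαC1 j).continuous_deriv le_rfl).continuousOn)
  choose K hKb using hK
  obtain ⟨Kα, hKα0, hKαb⟩ : ∃ Kα : ℝ, 0 ≤ Kα ∧ ∀ j, K j ≤ Kα := by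
    refine ⟨∑ j, |K j|, Finset.sum_nonneg fun j _ => abs_nonneg _, fun j => ?_⟩
    exact le_trans (le_abs_self _)
      (Finset.single_le_sum (fun i _ => abs_nonneg (K i)) (Finset.mem_univ j))
  have hLip : ∀ j, ∀ x ∈ Icc (-1:ℝ) 2, ∀ y ∈ Icc (-1:ℝ) 2, |α j x - α j y| ≤ Kα * |x - y| := by
    intro j x hx y hy
    have h1 : ∀ z ∈ Icc (-1:ℝ) 2, DifferentiableAt ℝ (α j) z := fun z _ =>
      ((hαC1 j).differentiable one_ne_zero).differentiableAt
    have h2 : ∀ z ∈ Icc (-1:ℝ) 2, ‖deriv (α j) z‖ ≤ Kα := fun z hz =>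
      (hKb j z hz).trans (hKαb j)
    have h3 := (convex_Icc (-1:ℝ) 2).norm_image_sub_le_of_norm_deriv_le h1 h2 hy hx
    simpa [Real.norm_eq_abs] using h3
  by_contra hcon
  push_neg at hcon
  obtain ⟨t0, ht0, j0, hj0⟩ := hcon
  set Bad : Set ℝ :=
    {r | 0 ≤ r ∧ ¬ ∀ j, p r j ∈ Icc (0:ℝ) 1 ∧ ps r j ∈ Icc (0:ℝ) 1} with hBad
  have hBadne : Bad.Nonempty := ⟨t0, ht0, fun hall => hj0 (hall j0).1 (hall j0).2⟩
  have hBadbdd : BddBelow Bad := ⟨0, fun r hr => hr.1⟩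
  set s0 := sInf Bad with hs0def
  have hs00 : 0 ≤ s0 := le_csInf hBadne fun r hr => hr.1
  have hlt : ∀ r, 0 ≤ r → r < s0 → ∀ j, p r j ∈ Icc (0:ℝ) 1 ∧ ps r j ∈ Icc (0:ℝ) 1 := by
    intro r hr hrs
    by_contra hb
    exact absurd (csInf_le hBadbdd ⟨hr, hb⟩) (not_le.2 hrs)
  have hbox_s : ∀ j, p s0 j ∈ Icc (0:ℝ) 1 ∧ ps s0 j ∈ Icc (0:ℝ) 1 := by
    rcases eq_or_lt_of_le hs00 with he | hpos
    · exact he ▸ hinit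
    · have hmem : s0 ∈ closure (Ico 0 s0) := by
        rw [closure_Ico (ne_of_lt hpos)]
        exact ⟨hs00, le_rfl⟩
      intro j
      constructor
      · have hsub : Ico 0 s0 ⊆ (fun r => p r j) ⁻¹' (Icc (0:ℝ) 1) :=
          fun r hr => ((hlt r hr.1 hr.2) j).1
        have hcl : IsClosed ((fun r => p r j) ⁻¹' (Icc (0:ℝ) 1)) :=
          isClosed_Icc.preimage (hpc j)
        exact hcl.closure_subset ((closure_mono hsub) hmem)
      · have hsub : Ico 0 s0 ⊆ (fun r => ps r j) ⁻¹' (Icc (0:ℝ) 1) :=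
          fun r hr => ((hlt r hr.1 hr.2) j).2
        have hcl : IsClosed ((fun r => ps r j) ⁻¹' (Icc (0:ℝ) 1)) :=
          isClosed_Icc.preimage (hpsc j)
        exact hcl.closure_subset ((closure_mono hsub) hmem)
  have hopen : ∃ ε > (0:ℝ), ∀ r ∈ Icc s0 (s0 + ε), ∀ j,
      p r j ∈ Icc (-1:ℝ) 2 ∧ ps r j ∈ Icc (-1:ℝ) 2 := by
    have hU : IsOpen (⋂ j, ((fun r => p r j) ⁻¹' Ioo (-1:ℝ) 2
        ∩ (fun r => ps r j) ⁻¹' Ioo (-1:ℝ) 2)) :=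
      isOpen_iInter_of_finite fun j =>
        ((isOpen_Ioo).preimage (hpc j)).inter ((isOpen_Ioo).preimage (hpsc j))
    have hsU : s0 ∈ ⋂ j, ((fun r => p r j) ⁻¹' Ioo (-1:ℝ) 2
        ∩ (fun r => ps r j) ⁻¹' Ioo (-1:ℝ) 2) := by
      refine Set.mem_iInter.2 fun j => ?_
      obtain ⟨⟨a1, a2⟩, b1, b2⟩ := hbox_s j
      exact ⟨⟨by norm_num; linarith, by norm_num; linarith⟩,
        ⟨by norm_num; linarith, by norm_num; linarith⟩⟩
    obtain ⟨ε, hε, hball⟩ := Metric.isOpen_iff.1 hU s0 hsU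
    refine ⟨ε/2, by positivity, ?_⟩
    intro r hr j
    have hrb : r ∈ Metric.ball s0 ε := by
      rw [Metric.mem_ball, Real.dist_eq, abs_sub_lt_iff]
      exact ⟨by linarith [hr.1, hr.2], by linarith [hr.1, hr.2]⟩
    have hm := Set.mem_iInter.1 (hball hrb) j
    exact ⟨⟨hm.1.1.le, hm.1.2.le⟩, ⟨hm.2.1.le, hm.2.2.le⟩⟩
  obtain ⟨ε, hε, hreg⟩ := hopen
  have hstep := actSIS_step N A Ahat hA hAhat β hβ δ hδ τ hτ dhat hdhat hdhatpos
    α hαrange Kα hKα0 hLip p ps hp hps s0 (s0 + ε) (by linarith) hbox_s hreg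
  have hub : ∀ r ∈ Bad, s0 + ε ≤ r := by
    intro r hr
    by_contra hlt2
    push_neg at hlt2
    have hr0 : 0 ≤ r := hr.1
    have hgood : ∀ j, p r j ∈ Icc (0:ℝ) 1 ∧ ps r j ∈ Icc (0:ℝ) 1 := by
      rcases lt_or_ge r s0 with hc | hc
      · exact hlt r hr0 hc
      · exact hstep r ⟨hc, by linarith⟩
    exact hr.2 hgood
  have : s0 + ε ≤ s0 := le_csInf hBadne hub
  linarith
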